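/- Let G be a group flag-transitive on the coset incidence system (G, (G_i)_{i∈I}) in the sense that for all subsets J, H, K ⊆ I, (G_J G_H) ∩ (G_J G_K) = G_J (G_H ∩ G_K) where G_J = ⋂_{j∈J} G_j. Then for every nonempty J ⊆ I and every family (g_j)_{j∈J} of elements of G such that g_i G_i ∩ g_j G_j ≠ ∅ for all i, j ∈ J, there exists g ∈ G with ⋂_{j∈J} g_j G_j = g G_J. -/

import Mathlib

open scoped Pointwise

section aux
variable {G : Type*} [Group G]

lemma aux_coset_eq (B : Subgroup G) {a z : G} (h : z ∈ a • (B:Set G)) :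
    a • (B:Set G) = z • (B:Set G) := by
  rw [mem_leftCoset_iff] at h
  conv_lhs => rw [← smul_coe_set h]
  rw [smul_smul, mul_inv_cancel_left]

lemma aux_inter (B C : Subgroup G) {a b z : G} (h1 : z ∈ a • (B:Set G))
    (h2 : z ∈ b • (C:Set G)) :
    a • (B:Set G) ∩ b • (C:Set G) = z • ((B ⊓ C : Subgroup G):Set G) := by
  rw [aux_coset_eq B h1, aux_coset_eq C h2, Subgroup.coe_inf,
    Set.smul_set_inter]

lemma aux_helly3 (A B C : Subgroup G)
    (h : ((A:Set G) * (B:Set G)) ∩ ((A:Set G) * (C:Set G))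
      = (A:Set G) * ((B ⊓ C : Subgroup G):Set G)) {a b c : G}
    (hab : (a • (B:Set G) ∩ b • (C:Set G)).Nonempty)
    (hac : (a • (B:Set G) ∩ c • (A:Set G)).Nonempty)
    (hbc : (b • (C:Set G) ∩ c • (A:Set G)).Nonempty) :
    (a • (B:Set G) ∩ b • (C:Set G) ∩ c • (A:Set G)).Nonempty := by
  obtain ⟨w, hwB, hwC⟩ := hab
  -- c⁻¹ * w ∈ A * B
  obtain ⟨u, huB, huA⟩ := hac
  obtain ⟨v, hvC, hvA⟩ := hbc
  rw [mem_leftCoset_iff] at hwB hwC huB huA hvC hvA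
  have hwAB : c⁻¹ * w ∈ (A:Set G) * (B:Set G) := by
    refine ⟨c⁻¹ * u, huA, (a⁻¹ * u)⁻¹ * (a⁻¹ * w), ?_, by group⟩
    exact mul_mem (inv_mem huB) hwB
  have hwAC : c⁻¹ * w ∈ (A:Set G) * (C:Set G) := by
    refine ⟨c⁻¹ * v, hvA, (b⁻¹ * v)⁻¹ * (b⁻¹ * w), ?_, by group⟩
    exact mul_mem (inv_mem hvC) hwC
  have : c⁻¹ * w ∈ (A:Set G) * ((B ⊓ C : Subgroup G):Set G) := by
    rw [← h]; exact ⟨hwAB, hwAC⟩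
  obtain ⟨p, hp, q, hq, hpq⟩ := this
  refine ⟨w * q⁻¹, ⟨?_, ?_⟩, ?_⟩
  · rw [mem_leftCoset_iff, ← mul_assoc]
    exact mul_mem hwB (inv_mem hq.1)
  · rw [mem_leftCoset_iff, ← mul_assoc]
    exact mul_mem hwC (inv_mem hq.2)
  · rw [mem_leftCoset_iff]
    have hpq' : p * q = c⁻¹ * w := hpq
    have : c⁻¹ * (w * q⁻¹) = p := by rw [← mul_assoc, ← hpq']; group
    rw [this]; exact hp

lemma aux_biInter_coset {I : Type*} (Gi : I → Subgroup G) (g : I → G)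
    (S : Set I) {z : G} (hz : z ∈ ⋂ j ∈ S, g j • (Gi j : Set G)) :
    (⋂ j ∈ S, g j • (Gi j : Set G)) = z • ((⨅ j ∈ S, Gi j : Subgroup G) : Set G) := by
  have h1 : (⋂ j ∈ S, g j • (Gi j : Set G)) = ⋂ j ∈ S, z • (Gi j : Set G) := by
    apply Set.iInter₂_congr
    intro j hj
    exact aux_coset_eq _ (by simpa using Set.mem_iInter₂.1 hz j hj)
  rw [h1]
  have h2 : ((⨅ j ∈ S, Gi j : Subgroup G) : Set G) = ⋂ j ∈ S, (Gi j : Set G) := by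
    simp [Subgroup.coe_iInf]
  rw [h2]
  simp only [Set.smul_set_iInter]

end aux

lemma aux_nonempty {G : Type*} [Group G] {I : Type*}
    (Gi : I → Subgroup G) (GJ : Set I → Subgroup G)
    (hGJ : ∀ J : Set I, GJ J = ⨅ j ∈ J, Gi j)
    (hFT : ∀ J H K : Set I,
      (((GJ J : Set G) * (GJ H : Set G)) ∩ ((GJ J : Set G) * (GJ K : Set G)))
        = (GJ J : Set G) * ((GJ H ⊓ GJ K : Subgroup G) : Set G))
    (g : I → G) (s : Finset I) (hne : s.Nonempty)
    (hp : ∀ i ∈ s, ∀ j ∈ s,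
      ((g i • (Gi i : Set G)) ∩ (g j • (Gi j : Set G))).Nonempty) :
    (⋂ j ∈ (↑s : Set I), g j • (Gi j : Set G)).Nonempty := by
  classical
  induction s using Finset.strongInduction with
  | _ s ih =>
  obtain ⟨i, hi⟩ := hne
  set t := s.erase i with hts
  by_cases htne : t.Nonempty
  · obtain ⟨k, hk⟩ := htne
    have hki : k ≠ i := (Finset.mem_erase.1 hk).1
    have hks : k ∈ s := (Finset.mem_erase.1 hk).2
    set t' := t.erase k with ht's
    have hst : s = insert i (insert k t') := by
      rw [ht's, hts, Finset.insert_erase hk, Finset.insert_erase hi]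
    by_cases ht'ne : t'.Nonempty
    · -- use helly3
      have hit' : i ∉ t' := fun h => (Finset.mem_erase.1 ((Finset.mem_erase.1 h).2)).1 rfl
      have hkt' : k ∉ t' := fun h => (Finset.mem_erase.1 h).1 rfl
      have ht'sub : t' ⊆ s := fun x hx => (Finset.mem_erase.1 ((Finset.mem_erase.1 hx).2)).2
      have hsub1 : insert i t' ⊂ s := by
        rw [hst]
        refine Finset.ssubset_iff_of_subset ?_ |>.2 ⟨k, by simp, ?_⟩
        · intro x hx
          rcases Finset.mem_insert.1 hx with h | h
          · simp [h]
          · simp [h]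
        · simp [Finset.mem_insert, hki, hkt']
      have hsub2 : insert k t' ⊂ s := by
        rw [hst]
        refine Finset.ssubset_iff_of_subset ?_ |>.2 ⟨i, by simp, ?_⟩
        · intro x hx; simp [Finset.mem_insert.1 hx]
        · simp [Finset.mem_insert, hki.symm, hit']
      have hp1 : ∀ a ∈ insert i t', ∀ b ∈ insert i t',
          ((g a • (Gi a : Set G)) ∩ (g b • (Gi b : Set G))).Nonempty :=
        fun a ha b hb => hp a (hsub1.1 ha) b (hsub1.1 hb)
      have hp2 : ∀ a ∈ insert k t', ∀ b ∈ insert k t',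
          ((g a • (Gi a : Set G)) ∩ (g b • (Gi b : Set G))).Nonempty :=
        fun a ha b hb => hp a (hsub2.1 ha) b (hsub2.1 hb)
      have h1 := ih (insert i t') hsub1 ⟨i, Finset.mem_insert_self i t'⟩ hp1
      have h2 := ih (insert k t') hsub2 ⟨k, Finset.mem_insert_self k t'⟩ hp2
      have h0 := ih t' (lt_of_le_of_lt (show t' ≤ insert i t' from Finset.subset_insert i t') hsub1) ht'ne
        (fun a ha b hb => hp a (ht'sub ha) b (ht'sub hb))
      obtain ⟨z, hz⟩ := h0
      have heq := aux_biInter_coset Gi g (↑t' : Set I) hz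
      set A : Subgroup G := ⨅ j ∈ (↑t' : Set I), Gi j with hA
      have hGJt' : GJ (↑t' : Set I) = A := hGJ _
      have hGJi : GJ ({i} : Set I) = Gi i := by rw [hGJ]; simp
      have hGJk : GJ ({k} : Set I) = Gi k := by rw [hGJ]; simp
      have hflag := hFT (↑t' : Set I) ({i} : Set I) ({k} : Set I)
      rw [hGJt', hGJi, hGJk] at hflag
      have h1' : ((g i • (Gi i : Set G)) ∩ z • (A : Set G)).Nonempty := by
        rw [← heq]
        simpa [Set.biInter_insert] using h1
      have h2' : ((g k • (Gi k : Set G)) ∩ z • (A : Set G)).Nonempty := by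
        rw [← heq]
        simpa [Set.biInter_insert] using h2
      have hik := hp i hi k hks
      have hh := aux_helly3 A (Gi i) (Gi k) hflag hik h1' h2'
      obtain ⟨w, ⟨hwi, hwk⟩, hwA⟩ := hh
      refine ⟨w, ?_⟩
      rw [hst]
      simp only [Finset.coe_insert, Set.biInter_insert]
      exact ⟨hwi, hwk, heq ▸ hwA⟩
    · -- t' = ∅, so s = {i, k}
      have ht'e : t' = ∅ := Finset.not_nonempty_iff_eq_empty.1 ht'ne
      rw [hst, ht'e]
      obtain ⟨w, hw⟩ := hp i hi k hks
      exact ⟨w, by simpa [Set.biInter_insert] using hw⟩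
  · -- s = {i}
    have : s = {i} := by
      rw [← Finset.insert_erase hi, ← hts, Finset.not_nonempty_iff_eq_empty.1 htne]
      rfl
    rw [this]
    exact ⟨g i, by simp [mem_leftCoset_iff, Subgroup.one_mem]⟩

/-- If `G` is flag-transitive on `(G, (G_i)_{i∈I})` in the form
`(G_J G_H) ∩ (G_J G_K) = G_J (G_H ∩ G_K)`, then every family of pairwise incident
cosets `(g_j G_j)_{j∈J}` has intersection equal to a single coset `g G_J`. -/
theorem stmt_18 {G : Type*} [Group G] {I : Type*} [Fintype I]
    (Gi : I → Subgroup G)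
    (GJ : Set I → Subgroup G)
    (hGJ : ∀ J : Set I, GJ J = ⨅ j ∈ J, Gi j)
    (hFT : ∀ J H K : Set I,
      (((GJ J : Set G) * (GJ H : Set G)) ∩ ((GJ J : Set G) * (GJ K : Set G)))
        = (GJ J : Set G) * ((GJ H ⊓ GJ K : Subgroup G) : Set G))
    (J : Set I) (hJ : J.Nonempty) (g : I → G)
    (hg : ∀ i ∈ J, ∀ j ∈ J,
      ((g i • (Gi i : Set G)) ∩ (g j • (Gi j : Set G))).Nonempty) :
    ∃ x : G, (⋂ j ∈ J, g j • (Gi j : Set G)) = x • (GJ J : Set G) := by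
  classical
  have hfin : J.Finite := Set.toFinite J
  set s : Finset I := hfin.toFinset with hs
  have hcoe : (↑s : Set I) = J := hfin.coe_toFinset
  have hne : s.Nonempty := by
    rw [← Finset.coe_nonempty, hcoe]; exact hJ
  have hp : ∀ i ∈ s, ∀ j ∈ s,
      ((g i • (Gi i : Set G)) ∩ (g j • (Gi j : Set G))).Nonempty := by
    intro i hi j hj
    exact hg i (hcoe ▸ hi) j (hcoe ▸ hj)
  obtain ⟨z, hz⟩ := aux_nonempty Gi GJ hGJ hFT g s hne hp
  rw [hcoe] at hz
  exact ⟨z, by rw [aux_biInter_coset Gi g J hz, hGJ]⟩
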